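/- Let C ⊆ 𝔤 be an invariant cone. Then C ⊆ C₊ ⊕ 𝔤⁰ ⊕ (−C₋); that is, if x ∈ C is written x = x₋₁ + x₀ + x₁ with xⱼ ∈ 𝔤ʲ, then x₁ ∈ C₊ = C ∩ 𝔤¹ and x₋₁ ∈ C ∩ 𝔤⁻¹ = −C₋. -/

import Mathlib

/-- The exponential `e^{ad y}` of the endomorphism `ad y` of a topological Lie algebra,
defined by the exponential series. -/
noncomputable def expAd {L : Type*} [LieRing L] [LieAlgebra ℝ L] [TopologicalSpace L]
    (y : L) (x : L) : L :=
  ∑' n : ℕ, ((n.factorial : ℝ)⁻¹) • ((LieAlgebra.ad ℝ L y ^ n) x)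

lemma expAd_eigen_pow {L : Type*} [LieRing L] [LieAlgebra ℝ L]
    (h v : L) (l t : ℝ) (hv : ⁅h, v⁆ = l • v) (n : ℕ) :
    ((LieAlgebra.ad ℝ L (t • h)) ^ n) v = (t * l) ^ n • v := by
  induction n with
  | zero => simp
  | succ n ih =>
    rw [pow_succ, Module.End.mul_apply]
    have h1 : (LieAlgebra.ad ℝ L (t • h)) v = (t * l) • v := by
      rw [LieAlgebra.ad_apply, smul_lie, hv, smul_smul]
    rw [h1, map_smul, ih, smul_smul, ← pow_succ']

lemma exp_series_eq (s : ℝ) :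
    ∑' n : ℕ, ((n.factorial : ℝ)⁻¹ * s ^ n) = Real.exp s := by
  rw [Real.exp_eq_exp_ℝ, NormedSpace.exp_eq_tsum ℝ]
  simp [smul_eq_mul]

lemma summable_exp_series (s : ℝ) :
    Summable (fun n : ℕ => (n.factorial : ℝ)⁻¹ * s ^ n) := by
  have := Real.summable_pow_div_factorial s
  refine this.congr fun n => ?_
  rw [div_eq_mul_inv, mul_comm]

lemma expAd_eigen {L : Type*} [LieRing L] [LieAlgebra ℝ L] [TopologicalSpace L]
    [IsTopologicalAddGroup L] [ContinuousSMul ℝ L] [T2Space L]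
    (h v : L) (l t : ℝ) (hv : ⁅h, v⁆ = l • v) :
    expAd (t • h) v = Real.exp (t * l) • v := by
  unfold expAd
  have : ∀ n : ℕ, ((n.factorial : ℝ)⁻¹) • (((LieAlgebra.ad ℝ L (t • h)) ^ n) v)
      = ((n.factorial : ℝ)⁻¹ * (t * l) ^ n) • v := by
    intro n
    rw [expAd_eigen_pow h v l t hv n, smul_smul]
  rw [tsum_congr this, Summable.tsum_smul_const (summable_exp_series (t * l)), exp_series_eq]

lemma expAd_three {L : Type*} [LieRing L] [LieAlgebra ℝ L] [TopologicalSpace L]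
    [IsTopologicalAddGroup L] [ContinuousSMul ℝ L] [T2Space L]
    (h a b c : L) (t : ℝ)
    (ha : ⁅h, a⁆ = -a) (hb : ⁅h, b⁆ = 0) (hc : ⁅h, c⁆ = c) :
    expAd (t • h) (a + b + c) = Real.exp (-t) • a + b + Real.exp t • c := by
  have ha' : ⁅h, a⁆ = (-1 : ℝ) • a := by rw [ha]; simp
  have hb' : ⁅h, b⁆ = (0 : ℝ) • b := by rw [hb]; simp
  have hc' : ⁅h, c⁆ = (1 : ℝ) • c := by rw [hc]; simp
  have key : ∀ n : ℕ, ((n.factorial : ℝ)⁻¹) • (((LieAlgebra.ad ℝ L (t • h)) ^ n) (a + b + c))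
      = ((n.factorial : ℝ)⁻¹ * (t * (-1)) ^ n) • a + ((n.factorial : ℝ)⁻¹ * (t * 0) ^ n) • b
        + ((n.factorial : ℝ)⁻¹ * (t * 1) ^ n) • c := by
    intro n
    rw [map_add, map_add, expAd_eigen_pow h a (-1) t ha' n, expAd_eigen_pow h b 0 t hb' n,
      expAd_eigen_pow h c 1 t hc' n, smul_add, smul_add, smul_smul, smul_smul, smul_smul]
  unfold expAd
  rw [tsum_congr key]
  have s1 := (summable_exp_series (t * (-1))).smul_const a
  have s2 := (summable_exp_series (t * 0)).smul_const b
  have s3 := (summable_exp_series (t * 1)).smul_const c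
  rw [Summable.tsum_add (s1.add s2) s3, Summable.tsum_add s1 s2,
    Summable.tsum_smul_const (summable_exp_series _), Summable.tsum_smul_const (summable_exp_series _),
    Summable.tsum_smul_const (summable_exp_series _), exp_series_eq, exp_series_eq, exp_series_eq]
  norm_num

/-- if `𝔤` is 3-graded by `ad h` and `C` is an invariant cone, then
`C ⊆ C₊ ⊕ 𝔤⁰ ⊕ (−C₋)`: whenever `x ∈ C` is written `x = a + b + c` with graded
components `a ∈ 𝔤⁻¹`, `b ∈ 𝔤⁰`, `c ∈ 𝔤¹`, then `c ∈ C ∩ 𝔤¹ = C₊` and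
`a ∈ C ∩ 𝔤⁻¹ = −C₋`. -/
theorem statement0 {L : Type*} [LieRing L] [LieAlgebra ℝ L]
    [TopologicalSpace L] [IsTopologicalAddGroup L] [ContinuousSMul ℝ L] [T2Space L]
    [FiniteDimensional ℝ L]
    (h : L)
    (hgrad : ∀ x : L, ∃ a b c : L,
      ⁅h, a⁆ = -a ∧ ⁅h, b⁆ = 0 ∧ ⁅h, c⁆ = c ∧ x = a + b + c)
    (C : Set L) (hCcl : IsClosed C) (hCcv : Convex ℝ C)
    (hCcone : ∀ r : ℝ, 0 ≤ r → ∀ x ∈ C, r • x ∈ C)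
    (hCinv : ∀ y : L, expAd y '' C = C)
    {x a b c : L} (hx : x ∈ C)
    (ha : ⁅h, a⁆ = -a) (hb : ⁅h, b⁆ = 0) (hc : ⁅h, c⁆ = c)
    (hxabc : x = a + b + c) :
    c ∈ C ∧ a ∈ C := by
  have hmem : ∀ t : ℝ, Real.exp (-t) • a + b + Real.exp t • c ∈ C := by
    intro t
    have : expAd (t • h) x ∈ C := by
      rw [← hCinv (t • h)]
      exact Set.mem_image_of_mem _ hx
    rwa [hxabc, expAd_three h a b c t ha hb hc] at this
  constructor
  · -- c : take t → ∞ of exp(-t) • (exp(-t)•a + b + exp t • c)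
    have hg : ∀ t : ℝ, Real.exp (-(2*t)) • a + Real.exp (-t) • b + c ∈ C := by
      intro t
      have := hCcone (Real.exp (-t)) (Real.exp_nonneg _) _ (hmem t)
      have heq : Real.exp (-t) • (Real.exp (-t) • a + b + Real.exp t • c)
          = Real.exp (-(2*t)) • a + Real.exp (-t) • b + c := by
        rw [smul_add, smul_add, smul_smul, smul_smul, ← Real.exp_add, ← Real.exp_add]
        norm_num [two_mul]
      rwa [heq] at this
    have hlim : Filter.Tendsto (fun t : ℝ => Real.exp (-(2*t)) • a + Real.exp (-t) • b + c)
        Filter.atTop (nhds c) := by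
      have l1 : Filter.Tendsto (fun t : ℝ => Real.exp (-(2*t))) Filter.atTop (nhds 0) := by
        apply Real.tendsto_exp_atBot.comp
        exact Filter.tendsto_neg_atTop_atBot.comp
          (Filter.Tendsto.const_mul_atTop (by norm_num : (0:ℝ) < 2) Filter.tendsto_id)
      have l2 : Filter.Tendsto (fun t : ℝ => Real.exp (-t)) Filter.atTop (nhds 0) :=
        Real.tendsto_exp_atBot.comp Filter.tendsto_neg_atTop_atBot
      have : Filter.Tendsto (fun t : ℝ => Real.exp (-(2*t)) • a + Real.exp (-t) • b + c)
          Filter.atTop (nhds ((0:ℝ) • a + (0:ℝ) • b + c)) :=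
        ((l1.smul_const a).add (l2.smul_const b)).add tendsto_const_nhds
      simpa using this
    exact hCcl.mem_of_tendsto hlim (Filter.Eventually.of_forall hg)
  · have hg : ∀ t : ℝ, a + Real.exp (-t) • b + Real.exp (-(2*t)) • c ∈ C := by
      intro t
      have := hCcone (Real.exp (-t)) (Real.exp_nonneg _) _ (hmem (-t))
      have heq : Real.exp (-t) • (Real.exp (-(-t)) • a + b + Real.exp (-t) • c)
          = a + Real.exp (-t) • b + Real.exp (-(2*t)) • c := by
        rw [smul_add, smul_add, smul_smul, smul_smul, ← Real.exp_add, ← Real.exp_add]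
        norm_num [two_mul]
      rwa [heq] at this
    have hlim : Filter.Tendsto (fun t : ℝ => a + Real.exp (-t) • b + Real.exp (-(2*t)) • c)
        Filter.atTop (nhds a) := by
      have l1 : Filter.Tendsto (fun t : ℝ => Real.exp (-(2*t))) Filter.atTop (nhds 0) := by
        apply Real.tendsto_exp_atBot.comp
        exact Filter.tendsto_neg_atTop_atBot.comp
          (Filter.Tendsto.const_mul_atTop (by norm_num : (0:ℝ) < 2) Filter.tendsto_id)
      have l2 : Filter.Tendsto (fun t : ℝ => Real.exp (-t)) Filter.atTop (nhds 0) :=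
        Real.tendsto_exp_atBot.comp Filter.tendsto_neg_atTop_atBot
      have : Filter.Tendsto (fun t : ℝ => a + Real.exp (-t) • b + Real.exp (-(2*t)) • c)
          Filter.atTop (nhds (a + (0:ℝ) • b + (0:ℝ) • c)) :=
        ((tendsto_const_nhds.add (l2.smul_const b))).add (l1.smul_const c)
      simpa using this
    exact hCcl.mem_of_tendsto hlim (Filter.Eventually.of_forall hg)
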